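/- (Cigler's odd identity) For all k, m ≥ 1 and n ≥ 0, det(C_{2k-1, i+j+2-k-m})_{i,j=0}^{n+m+k-2} = (-1)^{binom(m+k-1,2)} · det(C_{2k-1, i+j+1-k+m})_{i,j=0}^{n-1}, where an empty determinant equals 1. -/

import Mathlib

/-- Convoluted Catalan number `C_{K,p}` for natural `p`, with the
convention `binom(n,-1) = 0`. -/
def convCatalan (K p : ℕ) : ℤ :=
  ((2 * p + K - 1).choose p : ℤ) -
    (if p = 0 then 0 else ((2 * p + K - 1).choose (p - 1) : ℤ))

/-- Convoluted Catalan number for an integer index: `C_{K,p} = 0` for `p < 0`. -/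
def convCatalanZ (K : ℕ) (p : ℤ) : ℤ :=
  if p < 0 then 0 else convCatalan K p.toNat

/-- The Hankel determinant `D_{K,M}(N) = det(C_{K,i+j+M})_{i,j=0}^{N-1}`
(equal to `1` for `N = 0`). -/
def hankelDet (K : ℕ) (M : ℤ) (N : ℕ) : ℤ :=
  Matrix.det (Matrix.of fun i j : Fin N => convCatalanZ K ((i : ℕ) + (j : ℕ) + M))

noncomputable section
open PowerSeries Finset

/-- The Catalan generating function over ℤ. -/
def cps : PowerSeries ℤ := PowerSeries.mk fun n => (catalan n : ℤ)

lemma cps_eq : cps = 1 + X * cps ^ 2 := by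
  ext n
  cases n with
  | zero => simp [cps]
  | succ n =>
    rw [map_add, coeff_succ_X_mul, PowerSeries.coeff_one, if_neg (Nat.succ_ne_zero n)]
    rw [pow_two, PowerSeries.coeff_mul]
    simp only [cps, coeff_mk, zero_add]
    rw [catalan_succ' n]
    push_cast
    rfl

lemma cps_inv : cps * (1 - X * cps) = 1 := by
  linear_combination cps_eq

lemma constantCoeff_cps : PowerSeries.constantCoeff cps = 1 := by
  simp [cps]

lemma convCatalan_zero (K : ℕ) : convCatalan K 0 = 1 := by simp [convCatalan]

lemma convCatalan_K0 (p : ℕ) : convCatalan 0 (p + 1) = 0 := by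
  have h : 2 * (p + 1) + 0 - 1 = 2 * p + 1 := by omega
  have hs : (2 * p + 1).choose (p + 1) = (2 * p + 1).choose p := by
    have := Nat.choose_symm (n := 2 * p + 1) (k := p + 1) (by omega)
    simpa [show 2 * p + 1 - (p + 1) = p by omega] using this.symm
  simp only [convCatalan, Nat.add_sub_cancel, if_neg (Nat.succ_ne_zero p),
    show 2 * (p + 1) + 0 - 1 = 2 * p + 1 by omega, Nat.succ_sub_one, hs, sub_self]

lemma convCatalan_pascal (K p : ℕ) :
    convCatalan (K + 1) (p + 1) = convCatalan K (p + 1) + convCatalan (K + 2) p := by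
  cases p with
  | zero =>
    simp only [convCatalan]
    norm_num [Nat.choose_one_right, show 2 * 1 + (K + 1) - 1 = K + 2 by omega,
      show 2 * 1 + K - 1 = K + 1 by omega]
    push_cast; ring
  | succ p =>
    simp only [convCatalan]
    have e1 : 2 * (p + 2) + (K + 1) - 1 = (2 * p + K + 3) + 1 := by omega
    have e2 : 2 * (p + 2) + K - 1 = 2 * p + K + 3 := by omega
    have e3 : 2 * (p + 1) + (K + 2) - 1 = 2 * p + K + 3 := by omega
    rw [e1, e2, e3]
    rw [if_neg (Nat.succ_ne_zero (p+1)), if_neg (Nat.succ_ne_zero p), if_neg (Nat.succ_ne_zero (p+1))]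
    have p1 : (2 * p + K + 3 + 1).choose (p + 2) =
        (2 * p + K + 3).choose (p + 1) + (2 * p + K + 3).choose (p + 2) :=
      Nat.choose_succ_succ' _ _
    have p2 : (2 * p + K + 3 + 1).choose (p + 1) =
        (2 * p + K + 3).choose p + (2 * p + K + 3).choose (p + 1) :=
      Nat.choose_succ_succ' _ _
    simp only [Nat.add_sub_cancel, Nat.succ_sub_one]
    rw [p1, p2]
    push_cast; ring

lemma cps_pow_rec (K : ℕ) : cps ^ (K + 1) = cps ^ K + X * cps ^ (K + 2) := by
  linear_combination (cps ^ K) * cps_eq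

lemma coeff_cps_pow : ∀ p K : ℕ, PowerSeries.coeff p (cps ^ K) = convCatalan K p := by
  intro p
  induction p with
  | zero =>
    intro K
    rw [PowerSeries.coeff_zero_eq_constantCoeff, map_pow, constantCoeff_cps, one_pow,
      convCatalan_zero]
  | succ p ih =>
    intro K
    induction K with
    | zero => simp [convCatalan_K0 p]
    | succ K ihK =>
      rw [cps_pow_rec K, map_add, coeff_succ_X_mul, ihK, ih (K + 2), convCatalan_pascal]

/-- Coefficients of `(1 - X c)^K = c^{-K}`. -/
def eSeq (K t : ℕ) : ℤ := PowerSeries.coeff t ((1 - X * cps) ^ K)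

lemma eSeq_zero (K : ℕ) : eSeq K 0 = 1 := by
  rw [eSeq, PowerSeries.coeff_zero_eq_constantCoeff, map_pow]
  simp [constantCoeff_cps]

/-- F1: the convolution of `e` with `convCatalan K` is `δ₀`. -/
lemma eSeq_conv (K q : ℕ) :
    ∑ t ∈ Finset.range (q + 1), eSeq K t * convCatalan K (q - t) =
      if q = 0 then 1 else 0 := by
  have h1 : ((1 - X * cps) ^ K) * cps ^ K = 1 := by
    rw [← mul_pow]
    have : (1 - X * cps) * cps = 1 := by linear_combination cps_inv
    rw [this, one_pow]
  have h2 := congrArg (PowerSeries.coeff q) h1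
  rw [PowerSeries.coeff_mul, PowerSeries.coeff_one] at h2
  rw [Finset.Nat.sum_antidiagonal_eq_sum_range_succ_mk] at h2
  simpa [eSeq, coeff_cps_pow] using h2

/-- Degree bound: `(1-Xc)^d + (Xc)^d` is a polynomial of degree ≤ d/2. -/
lemma S_coeff_zero : ∀ d : ℕ,
    (∀ q : ℕ, d < 2 * q →
      PowerSeries.coeff q ((1 - X * cps) ^ d + (X * cps) ^ d) = 0) ∧
    (∀ q : ℕ, d + 1 < 2 * q →
      PowerSeries.coeff q ((1 - X * cps) ^ (d + 1) + (X * cps) ^ (d + 1)) = 0) := by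
  intro d
  induction d with
  | zero =>
    constructor
    · intro q hq
      have hq1 : q ≠ 0 := by omega
      simp [PowerSeries.coeff_one, hq1]
    · intro q hq
      have hq1 : q ≠ 0 := by omega
      have : (1 - X * cps) ^ 1 + (X * cps) ^ 1 = 1 := by ring
      rw [this]
      simp [PowerSeries.coeff_one, hq1]
  | succ d ih =>
    refine ⟨ih.2, ?_⟩
    intro q hq
    obtain ⟨q', rfl⟩ : ∃ q', q = q' + 1 := ⟨q - 1, by omega⟩
    have key : (1 - X * cps) ^ (d + 2) + (X * cps) ^ (d + 2) =
        ((1 - X * cps) ^ (d + 1) + (X * cps) ^ (d + 1)) -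
          X * ((1 - X * cps) ^ d + (X * cps) ^ d) := by
      have hab : (1 - X * cps) * (X * cps) = X * (cps * (1 - X * cps)) := by ring
      rw [cps_inv, mul_one] at hab
      linear_combination (-((1 - X * cps) ^ d + (X * cps) ^ d)) * hab
    rw [key, map_sub, coeff_succ_X_mul, ih.1 q' (by omega), ih.2 (q' + 1) (by omega),
      zero_sub, neg_eq_zero]

/-- F2: for `t ≥ k` (with `K = 2k-1`), `e_t = -C_{K, t-K}`. -/
lemma eSeq_tail (a t : ℕ) (ht : a + 1 ≤ t) :
    eSeq (2 * a + 1) t = - convCatalanZ (2 * a + 1) ((t : ℤ) - (2 * a + 1)) := by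
  have hs := (S_coeff_zero (2 * a)).2 t (by omega)
  rw [map_add] at hs
  have hb : PowerSeries.coeff t ((X * cps) ^ (2 * a + 1)) =
      convCatalanZ (2 * a + 1) ((t : ℤ) - (2 * a + 1)) := by
    rw [mul_pow, mul_comm ((X : PowerSeries ℤ) ^ (2 * a + 1)), PowerSeries.coeff_mul_X_pow']
    by_cases h : 2 * a + 1 ≤ t
    · rw [if_pos h, coeff_cps_pow, convCatalanZ, if_neg (by omega)]
      congr 1
      omega
    · rw [if_neg h, convCatalanZ, if_pos (by push_cast; omega)]
  rw [eSeq]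
  rw [hb] at hs
  linarith

lemma cZ_neg (K : ℕ) {q : ℤ} (h : q < 0) : convCatalanZ K q = 0 := by
  rw [convCatalanZ, if_pos h]

lemma eSeq_convZ (K q : ℕ) :
    ∑ t ∈ Finset.range (q + 1), eSeq K t * convCatalanZ K ((q : ℤ) - t) =
      if q = 0 then 1 else 0 := by
  rw [← eSeq_conv K q]
  apply Finset.sum_congr rfl
  intro t ht
  have ht' : t ≤ q := by simpa [Nat.lt_succ_iff] using ht
  congr 1
  rw [convCatalanZ, if_neg (by omega)]
  congr 1
  omega

/-- Truncated inner convolution. -/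
def inn (K i : ℕ) (ρ : ℤ) : ℤ :=
  ∑ t ∈ Finset.range (i + 1), eSeq K t * convCatalanZ K (ρ - t)

lemma inner1 (K i : ℕ) (r : ℤ) (hr : r ≤ i) :
    inn K i r = if r = 0 then 1 else 0 := by
  rcases lt_or_ge r 0 with h | h
  · rw [if_neg (by omega)]
    apply Finset.sum_eq_zero
    intro t _
    rw [cZ_neg K (by omega), mul_zero]
  · obtain ⟨q, rfl⟩ := Int.eq_ofNat_of_zero_le h
    have hq : q ≤ i := by exact_mod_cast hr
    rw [inn, show (if ((q : ℤ)) = 0 then (1:ℤ) else 0) = if q = 0 then 1 else 0 by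
      simp [Nat.cast_eq_zero]]
    rw [← eSeq_convZ K q]
    apply (Finset.sum_subset (Finset.range_subset_range.2 (by omega)) ?_).symm
    intro t _ ht2
    have : q < t := by simpa [Nat.lt_succ_iff] using ht2
    rw [cZ_neg K (by omega), mul_zero]

/-- The generic entry of `E * H * Eᵀ` as a double sum. -/
def Dsum (K i j : ℕ) (r : ℤ) : ℤ :=
  ∑ t ∈ Finset.range (i + 1), ∑ u ∈ Finset.range (j + 1),
    eSeq K t * eSeq K u * convCatalanZ K (r - t - u)

lemma Dsum_eq_inn (K i j : ℕ) (r : ℤ) :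
    Dsum K i j r = ∑ t ∈ Finset.range (i + 1), eSeq K t * inn K j (r - t) := by
  apply Finset.sum_congr rfl
  intro t _
  rw [inn, Finset.mul_sum]
  apply Finset.sum_congr rfl
  intro u _
  rw [mul_assoc]

lemma Dsum_comm (K i j : ℕ) (r : ℤ) : Dsum K i j r = Dsum K j i r := by
  rw [Dsum, Dsum, Finset.sum_comm]
  apply Finset.sum_congr rfl; intro u _
  apply Finset.sum_congr rfl; intro t _
  rw [sub_right_comm]; ring

lemma sum_e_delta (K i : ℕ) (r : ℤ) :
    ∑ t ∈ Finset.range (i + 1), eSeq K t * (if r - t = 0 then (1:ℤ) else 0) =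
      if 0 ≤ r ∧ r ≤ i then eSeq K r.toNat else 0 := by
  by_cases h : 0 ≤ r ∧ r ≤ i
  · rw [if_pos h, Finset.sum_eq_single r.toNat]
    · rw [if_pos (by omega), mul_one]
    · intro t ht hne
      rw [if_neg (by omega), mul_zero]
    · intro habs
      exact absurd (Finset.mem_range.2 (by omega)) habs
  · rw [if_neg h]
    apply Finset.sum_eq_zero
    intro t ht
    have ht' : t ≤ i := by simpa [Nat.lt_succ_iff] using ht
    rw [if_neg (by omega), mul_zero]

/-- Extension of `eSeq` by zero to integer indices. -/
def eZ (K : ℕ) (r : ℤ) : ℤ := if r < 0 then 0 else eSeq K r.toNat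

lemma Dsum_low (K s i j : ℕ) (hi : i ≤ s) :
    Dsum K i j ((i : ℤ) + j - s) =
      if j ≤ s then eZ K ((i : ℤ) + j - s) else 0 := by
  rw [Dsum_eq_inn]
  have h1 : ∀ t ∈ Finset.range (i + 1),
      eSeq K t * inn K j ((i : ℤ) + j - s - t) =
      eSeq K t * (if (i : ℤ) + j - s - t = 0 then 1 else 0) := by
    intro t _
    rw [inner1 K j _ (by omega)]
  rw [Finset.sum_congr rfl h1, sum_e_delta]
  by_cases hj : j ≤ s
  · rw [if_pos hj, eZ]
    by_cases hr : (0:ℤ) ≤ (i : ℤ) + j - s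
    · rw [if_pos ⟨hr, by omega⟩, if_neg (by omega)]
    · rw [if_neg (by omega), if_pos (by omega)]
  · rw [if_neg hj, if_neg (by omega)]

lemma inn_tail (a s i : ℕ) (hks : a ≤ s) (hi : s < i) (ρ : ℤ) (hρ : (i : ℤ) < ρ) :
    inn (2 * a + 1) i ρ =
      ∑ l ∈ Finset.range (ρ.toNat - i),
        convCatalanZ (2 * a + 1) ((i : ℤ) + 1 + l - (2 * a + 1)) *
          convCatalanZ (2 * a + 1) (ρ - (i + 1 + l)) := by
  set K := 2 * a + 1 with hK
  have h0 : (0:ℤ) ≤ ρ := by omega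
  have hfull : ∑ t ∈ Finset.range (ρ.toNat + 1), eSeq K t * convCatalanZ K (ρ - t) = 0 := by
    have := eSeq_convZ K ρ.toNat
    rw [if_neg (by omega)] at this
    rw [← this]
    apply Finset.sum_congr rfl
    intro t _
    congr 2
    omega
  have hsplit : ∑ t ∈ Finset.range (i + 1), eSeq K t * convCatalanZ K (ρ - t) +
      ∑ t ∈ Finset.Ico (i + 1) (ρ.toNat + 1), eSeq K t * convCatalanZ K (ρ - t) =
      ∑ t ∈ Finset.range (ρ.toNat + 1), eSeq K t * convCatalanZ K (ρ - t) :=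
    Finset.sum_range_add_sum_Ico _ (by omega)
  have hinn : inn K i ρ = - ∑ t ∈ Finset.Ico (i + 1) (ρ.toNat + 1),
      eSeq K t * convCatalanZ K (ρ - t) := by
    rw [hfull] at hsplit
    rw [inn]; linarith
  rw [hinn, ← Finset.sum_neg_distrib]
  have hterm : ∀ t ∈ Finset.Ico (i + 1) (ρ.toNat + 1),
      -(eSeq K t * convCatalanZ K (ρ - t)) =
      convCatalanZ K ((t : ℤ) - K) * convCatalanZ K (ρ - t) := by
    intro t ht
    obtain ⟨ht1, ht2⟩ := Finset.mem_Ico.1 ht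
    rw [eSeq_tail a t (by omega)]
    rw [hK]
    push_cast
    ring
  rw [Finset.sum_congr rfl hterm, Finset.sum_Ico_eq_sum_range]
  have hlen : ρ.toNat + 1 - (i + 1) = ρ.toNat - i := by omega
  rw [hlen]
  apply Finset.sum_congr rfl
  intro l _
  have c1 : ((i + 1 + l : ℕ) : ℤ) - (K : ℤ) = (i : ℤ) + 1 + l - (2 * a + 1) := by
    rw [hK]; push_cast; ring
  have c2 : ρ - ((i + 1 + l : ℕ) : ℤ) = ρ - ((i : ℤ) + 1 + l) := by push_cast; ring
  rw [c1, c2]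

lemma Dsum_high (a s i j : ℕ) (hks : a ≤ s) (hi : s < i) (hj : s < j) :
    Dsum (2 * a + 1) i j ((i : ℤ) + j - s) =
      convCatalanZ (2 * a + 1) ((i : ℤ) + j - s - (2 * a + 1)) := by
  set K := 2 * a + 1 with hK
  set r : ℤ := (i : ℤ) + j - s with hr
  set J : ℕ := j - s - 1 with hJ
  have hJ' : (J : ℤ) = (j : ℤ) - s - 1 := by omega
  rw [Dsum_comm, Dsum_eq_inn]
  -- split the `u`-sum at `J + 1`
  have hsplit : ∑ u ∈ Finset.range (J + 1), eSeq K u * inn K i (r - u) +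
      ∑ u ∈ Finset.Ico (J + 1) (j + 1), eSeq K u * inn K i (r - u) =
      ∑ u ∈ Finset.range (j + 1), eSeq K u * inn K i (r - u) :=
    Finset.sum_range_add_sum_Ico _ (by omega)
  rw [← hsplit]
  have hzero2 : ∑ u ∈ Finset.Ico (J + 1) (j + 1), eSeq K u * inn K i (r - u) = 0 := by
    apply Finset.sum_eq_zero
    intro u hu
    obtain ⟨hu1, hu2⟩ := Finset.mem_Ico.1 hu
    rw [inner1 K i _ (by omega), if_neg (by omega), mul_zero]
  rw [hzero2, add_zero]
  -- rewrite each inner sum via `inn_tail` and extend the range to `J + 1`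
  have hstep : ∀ u ∈ Finset.range (J + 1),
      eSeq K u * inn K i (r - u) =
      ∑ l ∈ Finset.range (J + 1),
        eSeq K u * (convCatalanZ K ((i : ℤ) + 1 + l - K) *
          convCatalanZ K (((J : ℤ) - u) - l)) := by
    intro u hu
    have hu' : u ≤ J := by simpa [Nat.lt_succ_iff] using hu
    have hρ : (i : ℤ) < r - u := by omega
    rw [inn_tail a s i hks hi (r - u) hρ]
    have hlen : (r - u).toNat - i = J - u + 1 := by omega
    rw [hlen, Finset.mul_sum]
    have hsub : ∑ l ∈ Finset.range (J - u + 1),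
        eSeq K u * (convCatalanZ K ((i : ℤ) + 1 + l - K) *
          convCatalanZ K (((J : ℤ) - u) - l)) =
        ∑ l ∈ Finset.range (J + 1),
        eSeq K u * (convCatalanZ K ((i : ℤ) + 1 + l - K) *
          convCatalanZ K (((J : ℤ) - u) - l)) := by
      apply Finset.sum_subset (Finset.range_subset_range.2 (by omega))
      intro l _ hl2
      have : J - u < l := by simpa [Nat.lt_succ_iff] using hl2
      rw [cZ_neg K (q := ((J : ℤ) - u) - l) (by omega), mul_zero, mul_zero]
    rw [← hsub]
    apply Finset.sum_congr rfl
    intro l _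
    congr 2
    congr 1
    omega
  rw [Finset.sum_congr rfl hstep, Finset.sum_comm]
  have hfin : ∀ l ∈ Finset.range (J + 1),
      ∑ u ∈ Finset.range (J + 1), eSeq K u * (convCatalanZ K ((i : ℤ) + 1 + l - K) *
          convCatalanZ K (((J : ℤ) - u) - l)) =
      convCatalanZ K ((i : ℤ) + 1 + l - K) * (if (J : ℤ) - l = 0 then 1 else 0) := by
    intro l _
    have : ∑ u ∈ Finset.range (J + 1), eSeq K u * (convCatalanZ K ((i : ℤ) + 1 + l - K) *
          convCatalanZ K (((J : ℤ) - u) - l)) =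
        convCatalanZ K ((i : ℤ) + 1 + l - K) *
          ∑ u ∈ Finset.range (J + 1), eSeq K u * convCatalanZ K (((J : ℤ) - l) - u) := by
      rw [Finset.mul_sum]
      apply Finset.sum_congr rfl
      intro u _
      rw [show ((J : ℤ) - u) - l = ((J : ℤ) - l) - u by ring]
      ring
    rw [this, ← inn, inner1 K J _ (by omega)]
  rw [Finset.sum_congr rfl hfin, Finset.sum_eq_single J]
  · rw [if_pos (by ring), mul_one]
    congr 1
    omega
  · intro l hl hne
    rw [if_neg (by omega), mul_zero]
  · intro habs
    exact absurd (Finset.mem_range.2 (by omega)) habs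

open Equiv Equiv.Perm in
lemma revPerm_key (r : ℕ) :
    finRotate (r + 1) * (Fin.revPerm : Perm (Fin (r + 1))) =
      Equiv.Perm.decomposeFin.symm (0, (Fin.revPerm : Perm (Fin r))) := by
  ext i
  induction i using Fin.cases with
  | zero =>
    rw [Equiv.Perm.decomposeFin_symm_apply_zero]
    simp only [Perm.mul_apply, Fin.revPerm_apply, Fin.rev_zero, finRotate_last]
  | succ i =>
    rw [Equiv.Perm.decomposeFin_symm_apply_succ]
    simp only [Perm.mul_apply, Fin.revPerm_apply, Fin.rev_succ, Equiv.swap_self,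
      Equiv.refl_apply]
    rw [finRotate_succ_apply]
    rw [Fin.val_add_one_of_lt (Fin.castSucc_lt_last _)]
    simp

open Equiv Equiv.Perm in
lemma sign_revPerm : ∀ r : ℕ,
    Equiv.Perm.sign (Fin.revPerm : Perm (Fin r)) = (-1) ^ (r.choose 2) := by
  intro r
  induction r with
  | zero =>
    have : (Fin.revPerm : Perm (Fin 0)) = 1 := by
      ext i; exact absurd i.2 (by omega)
    rw [this]; simp
  | succ r ih =>
    have h := congrArg Equiv.Perm.sign (revPerm_key r)
    rw [map_mul, sign_finRotate, Nat.add_sub_cancel, Equiv.Perm.decomposeFin.symm_sign, if_pos rfl, one_mul, ih] at h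
    have h2 : Equiv.Perm.sign (Fin.revPerm : Perm (Fin (r + 1))) =
        (-1) ^ r * ((-1) ^ r * Equiv.Perm.sign (Fin.revPerm : Perm (Fin (r + 1)))) := by
      rw [← mul_assoc, ← pow_add, Even.neg_one_pow ⟨r, rfl⟩, one_mul]
    rw [h2, h]
    rw [← pow_add]
    congr 1
    have := Nat.choose_succ_succ (r) 1
    simp [Nat.choose_one_right] at this
    omega

section Core
open Matrix

variable (a b n : ℕ)

/-- The unitriangular Toeplitz matrix of `e`. -/
def Emat : Matrix (Fin (a + b + 1 + n)) (Fin (a + b + 1 + n)) ℤ :=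
  Matrix.of fun i j => if (j : ℕ) ≤ (i : ℕ) then eSeq (2 * a + 1) ((i : ℕ) - (j : ℕ)) else 0

def Hmat : Matrix (Fin (a + b + 1 + n)) (Fin (a + b + 1 + n)) ℤ :=
  Matrix.of fun i j => convCatalanZ (2 * a + 1) ((i : ℕ) + (j : ℕ) + (-((a : ℤ) + b)))

lemma Emat_det : (Emat a b n).det = 1 := by
  rw [Matrix.det_of_lowerTriangular (Emat a b n) ?ht]
  case ht =>
    intro i j hij
    have : (i : ℕ) < (j : ℕ) := hij
    rw [Emat, Matrix.of_apply, if_neg (by omega)]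
  have hd : ∀ i, Emat a b n i i = 1 := by
    intro i
    rw [Emat, Matrix.of_apply, if_pos le_rfl, Nat.sub_self, eSeq_zero]
  rw [Finset.prod_congr rfl fun i _ => hd i, Finset.prod_const_one]

lemma Gentry (i j : Fin (a + b + 1 + n)) :
    (Emat a b n * Hmat a b n * (Emat a b n)ᵀ) i j =
      Dsum (2 * a + 1) (i : ℕ) (j : ℕ) ((i : ℕ) + (j : ℕ) - ((a + b : ℕ) : ℤ)) := by
  have hiN : (i : ℕ) < a + b + 1 + n := i.2
  have hjN : (j : ℕ) < a + b + 1 + n := j.2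
  set f : ℕ → ℕ → ℤ := fun t u =>
    (if t ≤ (i : ℕ) then eSeq (2 * a + 1) ((i : ℕ) - t) else 0) *
      convCatalanZ (2 * a + 1) ((t : ℤ) + u + (-((a : ℤ) + b))) with hf
  set g : ℕ → ℤ := fun u => if u ≤ (j : ℕ) then eSeq (2 * a + 1) ((j : ℕ) - u) else 0 with hg
  have step1 : ∀ u : Fin (a + b + 1 + n), (Emat a b n * Hmat a b n) i u =
      ∑ t ∈ Finset.range (a + b + 1 + n), f t (u : ℕ) := by
    intro u
    rw [Matrix.mul_apply]
    exact Fin.sum_univ_eq_sum_range (fun t => f t (u : ℕ)) (a + b + 1 + n)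
  have step2 : (Emat a b n * Hmat a b n * (Emat a b n)ᵀ) i j =
      ∑ u ∈ Finset.range (a + b + 1 + n),
        (∑ t ∈ Finset.range (a + b + 1 + n), f t u) * g u := by
    rw [Matrix.mul_apply]
    rw [Finset.sum_congr rfl (fun u _ => by
      rw [step1 u])]
    exact Fin.sum_univ_eq_sum_range
      (fun u => (∑ t ∈ Finset.range (a + b + 1 + n), f t u) * g u) (a + b + 1 + n)
  rw [step2]
  -- shrink the `u` range
  rw [← Finset.sum_subset (Finset.range_subset_range.2 (show (j : ℕ) + 1 ≤ a + b + 1 + n by omega))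
    (fun u _ hu2 => by
      simp only [hg]
      rw [if_neg (by simpa [Nat.lt_succ_iff] using hu2), mul_zero])]
  -- shrink each `t` range
  rw [Finset.sum_congr rfl (fun u hu => by
    rw [← Finset.sum_subset (Finset.range_subset_range.2 (show (i : ℕ) + 1 ≤ a + b + 1 + n by omega))
      (fun t _ ht2 => by
        simp only [hf]
        rw [if_neg (by simpa [Nat.lt_succ_iff] using ht2), zero_mul])])]
  rw [Dsum_comm, Dsum_eq_inn]
  conv_lhs => rw [← Finset.sum_range_reflect]
  apply Finset.sum_congr rfl
  intro u hu
  have hu' : u ≤ (j : ℕ) := by simpa [Nat.lt_succ_iff] using hu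
  rw [show (j : ℕ) + 1 - 1 - u = (j : ℕ) - u by omega]
  have hgv : g ((j : ℕ) - u) = eSeq (2 * a + 1) u := by
    simp only [hg]
    rw [if_pos (by omega), show (j : ℕ) - ((j : ℕ) - u) = u by omega]
  rw [hgv, inn, mul_comm]
  congr 1
  conv_lhs => rw [← Finset.sum_range_reflect]
  apply Finset.sum_congr rfl
  intro t ht
  have ht' : t ≤ (i : ℕ) := by simpa [Nat.lt_succ_iff] using ht
  rw [show (i : ℕ) + 1 - 1 - t = (i : ℕ) - t by omega]
  simp only [hf]
  rw [if_pos (by omega), show (i : ℕ) - ((i : ℕ) - t) = t by omega]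
  have harg : (((i : ℕ) - t : ℕ) : ℤ) + (((j : ℕ) - u : ℕ) : ℤ) + (-((a : ℤ) + b)) =
      ((i : ℕ) : ℤ) + ((j : ℕ) : ℤ) - ((a + b : ℕ) : ℤ) - u - t := by omega
  rw [harg]

/-- Top-left block. -/
def Tmat : Matrix (Fin (a + b + 1)) (Fin (a + b + 1)) ℤ :=
  Matrix.of fun x y => eZ (2 * a + 1) ((x : ℕ) + (y : ℕ) - ((a + b : ℕ) : ℤ))

/-- Bottom-right block: the Hankel matrix on the right-hand side. -/
def Hpr : Matrix (Fin n) (Fin n) ℤ :=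
  Matrix.of fun x y => convCatalanZ (2 * a + 1) ((x : ℕ) + (y : ℕ) + ((b : ℤ) + 1 - a))

lemma Gblock :
    (Emat a b n * Hmat a b n * (Emat a b n)ᵀ).submatrix finSumFinEquiv finSumFinEquiv =
      Matrix.fromBlocks (Tmat a b) 0 0 (Hpr a b n) := by
  apply Matrix.ext
  rintro (x | x) (y | y) <;>
    simp only [Matrix.submatrix_apply, finSumFinEquiv_apply_left, finSumFinEquiv_apply_right,
      Matrix.fromBlocks_apply₁₁, Matrix.fromBlocks_apply₁₂, Matrix.fromBlocks_apply₂₁,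
      Matrix.fromBlocks_apply₂₂, Matrix.zero_apply] <;>
    rw [Gentry] <;>
    simp only [Fin.coe_castAdd, Fin.coe_natAdd]
  · -- both small
    rw [Dsum_low (2 * a + 1) (a + b) _ _ (by omega)]
    rw [if_pos (by omega)]
    rfl
  · -- i small, j large
    rw [Dsum_low (2 * a + 1) (a + b) _ _ (by omega)]
    rw [if_neg (by omega)]
  · -- i large, j small
    rw [Dsum_comm]
    rw [show ((a + b + 1 + (x : ℕ) : ℕ) : ℤ) + ((y : ℕ) : ℤ) - ((a + b : ℕ) : ℤ) =
      ((y : ℕ) : ℤ) + ((a + b + 1 + (x : ℕ) : ℕ) : ℤ) - ((a + b : ℕ) : ℤ) by ring]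
    rw [Dsum_low (2 * a + 1) (a + b) _ _ (by omega)]
    rw [if_neg (by omega)]
  · -- both large
    rw [Dsum_high a (a + b) _ _ (by omega) (by omega) (by omega)]
    rw [Hpr, Matrix.of_apply]
    congr 1
    omega

open Equiv in
lemma Tmat_det : (Tmat a b).det = (-1) ^ ((a + b + 1).choose 2) := by
  set U : Matrix (Fin (a + b + 1)) (Fin (a + b + 1)) ℤ :=
    Matrix.of fun x y => eZ (2 * a + 1) (((y : ℕ) : ℤ) - ((x : ℕ) : ℤ)) with hUdef
  have hT : Tmat a b = U.submatrix Fin.revPerm id := by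
    apply Matrix.ext
    intro x y
    have hx : (x : ℕ) ≤ a + b := by omega
    have hrev : ((Fin.revPerm x : Fin (a + b + 1)) : ℕ) = a + b - (x : ℕ) := by
      simp [Fin.revPerm_apply, Fin.val_rev]
    rw [Matrix.submatrix_apply, hUdef, Tmat]
    simp only [Matrix.of_apply, id_eq, hrev]
    congr 1
    omega
  have hU : U.BlockTriangular id := by
    intro x y hxy
    rw [hUdef]
    simp only [Matrix.of_apply]
    rw [eZ, if_pos]
    have : (y : ℕ) < (x : ℕ) := hxy
    omega
  have hUdet : U.det = 1 := by
    rw [Matrix.det_of_upperTriangular hU]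
    apply Finset.prod_eq_one
    intro x _
    rw [hUdef]
    simp only [Matrix.of_apply, sub_self]
    rw [eZ, if_neg (by omega)]
    exact eSeq_zero _
  rw [hT, Matrix.det_permute, hUdet, mul_one, sign_revPerm]
  simp

theorem core : hankelDet (2 * a + 1) (-((a : ℤ) + b)) (a + b + 1 + n) =
    (-1) ^ ((a + b + 1).choose 2) * hankelDet (2 * a + 1) ((b : ℤ) + 1 - a) n := by
  have h0 : hankelDet (2 * a + 1) (-((a : ℤ) + b)) (a + b + 1 + n) = (Hmat a b n).det := rfl
  have h1 : hankelDet (2 * a + 1) ((b : ℤ) + 1 - a) n = (Hpr a b n).det := rfl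
  have hdetG : (Emat a b n * Hmat a b n * (Emat a b n)ᵀ).det = (Hmat a b n).det := by
    rw [Matrix.det_mul, Matrix.det_mul, Emat_det, Matrix.det_transpose, Emat_det,
      one_mul, mul_one]
  have hsub : ((Emat a b n * Hmat a b n * (Emat a b n)ᵀ).submatrix
      finSumFinEquiv finSumFinEquiv).det = (Emat a b n * Hmat a b n * (Emat a b n)ᵀ).det :=
    Matrix.det_submatrix_equiv_self _ _
  rw [h0, ← hdetG, ← hsub, Gblock, Matrix.det_fromBlocks_zero₂₁, Tmat_det, h1]

end Core

/-- Cigler's odd identity. -/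
theorem cigler_odd (k m n : ℕ) (hk : 1 ≤ k) (hm : 1 ≤ m) :
    hankelDet (2 * k - 1) (2 - (k : ℤ) - m) (n + m + k - 1) =
      (-1) ^ ((m + k - 1).choose 2) * hankelDet (2 * k - 1) (1 - (k : ℤ) + m) n := by
  obtain ⟨a, rfl⟩ : ∃ a, k = a + 1 := ⟨k - 1, by omega⟩
  obtain ⟨b, rfl⟩ : ∃ b, m = b + 1 := ⟨m - 1, by omega⟩
  rw [show 2 * (a + 1) - 1 = 2 * a + 1 by omega,
    show n + (b + 1) + (a + 1) - 1 = a + b + 1 + n by omega,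
    show (b + 1) + (a + 1) - 1 = a + b + 1 by omega,
    show (2 : ℤ) - ((a + 1 : ℕ) : ℤ) - ((b + 1 : ℕ) : ℤ) = -((a : ℤ) + b) by push_cast; ring,
    show (1 : ℤ) - ((a + 1 : ℕ) : ℤ) + ((b + 1 : ℕ) : ℤ) = (b : ℤ) + 1 - a by push_cast; ring]
  exact core a b n
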